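/- Let A be a simple non-unital C*-algebra and X a locally compact Hausdorff space. Then every closed ideal I of C₀(X, A) equals its own Lie normalizer: N(I) = {f ∈ C₀(X,A) : [f,g] ∈ I for all g} = I. In particular, every closed Lie ideal of C₀(X,A) squeezed between the closed commutator span of an ideal and its normalizer is itself a closed ideal. -/

import Mathlib

open scoped ZeroAtInfty ContinuousMapZero

section CStarAux

variable {B : Type*} [NonUnitalCStarAlgebra B]

lemma aux_quasi_nonneg (g : B) : ∀ t ∈ quasispectrum ℝ (star g * g), 0 ≤ t := by
  intro t ht
  rw [Unitization.quasispectrum_eq_spectrum_inr' ℝ ℂ] at ht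
  have h : ((star g * g : B) : Unitization ℂ B)
      = star (g : Unitization ℂ B) * (g : Unitization ℂ B) := by simp
  rw [h] at ht
  exact spectrum_star_mul_self_nonneg _ ht

lemma aux_center_closed : IsClosed ((NonUnitalStarSubalgebra.center ℝ B : Set B)) := by
  have h : (NonUnitalStarSubalgebra.center ℝ B : Set B) = ⋂ b : B, {x | b * x = x * b} := by
    ext x
    simp only [NonUnitalStarSubalgebra.coe_center, Set.mem_iInter, Set.mem_setOf_eq]
    exact ⟨fun hx b => (Semigroup.mem_center_iff.mp hx b), fun hx => Semigroup.mem_center_iff.mpr hx⟩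
  rw [h]
  exact isClosed_iInter fun b =>
    isClosed_eq (continuous_const.mul continuous_id) (continuous_id.mul continuous_const)

lemma aux_central_cfcₙ {c : B} (hcent : ∀ b : B, b * c = c * b)
    (f : ℝ → ℝ) : ∀ b : B, b * cfcₙ f c = cfcₙ f c * b := by
  have main : ∀ x ∈ NonUnitalStarSubalgebra.center ℝ B, ∀ b : B, b * x = x * b :=
    fun x hx => Semigroup.mem_center_iff.mp hx
  suffices h : cfcₙ f c ∈ NonUnitalStarSubalgebra.center ℝ B from main _ h
  refine cfcₙ_cases (· ∈ NonUnitalStarSubalgebra.center ℝ B) c f (zero_mem _) fun hf hf0 hsa => ?_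
  have h0 : ((0 : quasispectrum ℝ c) : ℝ) = 0 := rfl
  haveI : Fact (0 ∈ quasispectrum ℝ c) := ⟨quasispectrum.zero_mem ℝ c⟩
  have hdense := ContinuousMapZero.adjoin_id_dense (quasispectrum ℝ c)
  set φ := cfcₙHom (R := ℝ) (a := c) hsa with hφ
  have hadj : (NonUnitalStarAlgebra.adjoin ℝ {(ContinuousMapZero.id (quasispectrum ℝ c) : C(quasispectrum ℝ c, ℝ)₀)}) ≤
      (NonUnitalStarSubalgebra.center ℝ B).comap φ := by
    rw [NonUnitalStarAlgebra.adjoin_le_iff]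
    rintro g (rfl : g = ContinuousMapZero.id (quasispectrum ℝ c))
    show φ (ContinuousMapZero.id (quasispectrum ℝ c)) ∈ NonUnitalStarSubalgebra.center ℝ B
    have : φ (ContinuousMapZero.id (quasispectrum ℝ c)) = c := cfcₙHom_id hsa
    rw [this]
    exact Semigroup.mem_center_iff.mpr hcent
  have hmem : ∀ g : C(quasispectrum ℝ c, ℝ)₀, φ g ∈ NonUnitalStarSubalgebra.center ℝ B := by
    intro g
    have hg : g ∈ closure ((NonUnitalStarAlgebra.adjoin ℝ
        {(ContinuousMapZero.id (quasispectrum ℝ c) : C(quasispectrum ℝ c, ℝ)₀)} : Set _)) := hdense g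
    have := map_mem_closure (cfcₙHom_continuous hsa) hg (fun y hy => hadj hy)
    exact aux_center_closed.closure_subset this
  exact hmem _

lemma aux_center_trivial
    (hsimple : ∀ J : TwoSidedIdeal B, IsClosed (J : Set B) → J = ⊥ ∨ J = ⊤)
    (hnonunital : ¬ ∃ e : B, ∀ x : B, e * x = x ∧ x * e = x)
    (a : B) (ha : ∀ x : B, a * x = x * a) : a = 0 := by
  by_contra h
  have hsa : ∀ x : B, star a * x = x * star a := by
    intro x
    have h1 := congrArg star (ha (star x))
    simpa [star_mul] using h1.symm
  set c := star a * a with hc_def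
  have hc_cent : ∀ x : B, x * c = c * x := by
    intro x
    rw [hc_def, ← mul_assoc, ← hsa x, mul_assoc, ← ha x, ← mul_assoc]
  have hc_sa : IsSelfAdjoint c := IsSelfAdjoint.star_mul_self a
  have hr : 0 < ‖c‖ := by
    rw [hc_def, CStarRing.norm_star_mul_self]
    have : ‖a‖ ≠ 0 := norm_ne_zero_iff.mpr h
    positivity
  set r := ‖c‖ with hr_def
  set f : ℝ → ℝ := fun t => min (2 * |t| / r) 1 with hf_def
  have hf : Continuous f := by fun_prop
  have hf0 : f 0 = 0 := by simp [hf_def]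
  set gg : ℝ → ℝ := fun t => max (|t| - r / 2) 0 with hgg_def
  have hgg : Continuous gg := by fun_prop
  have hgg0 : gg 0 = 0 := by simp only [hgg_def, abs_zero, zero_sub]; rw [max_eq_right (by linarith)]
  have hfg : ∀ t, f t * gg t = gg t := by
    intro t
    rcases le_or_gt (|t|) (r / 2) with h1 | h1
    · have : gg t = 0 := by simp [hgg_def]; linarith
      rw [this, mul_zero]
    · have : f t = 1 := by
        have h2 : (1:ℝ) ≤ 2 * |t| / r := by
          rw [le_div_iff₀ hr]
          linarith
        simp [hf_def, min_eq_right h2]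
      rw [this, one_mul]
  set e := cfcₙ f c with he_def
  set hh := cfcₙ gg c with hh_def
  have he_cent : ∀ x : B, x * e = e * x := aux_central_cfcₙ hc_cent f
  have h_eh : e * hh = hh := by
    rw [he_def, hh_def, ← cfcₙ_mul f gg c (by fun_prop) (by simp [hf0]) (by fun_prop)
      (by simp [hgg0])]
    exact cfcₙ_congr fun t _ => hfg t
  have h_he : hh * e = hh := by
    rw [he_cent hh, h_eh]
  set S : TwoSidedIdeal B := TwoSidedIdeal.mk' {x : B | e * x = x ∧ x * e = x}
    (by simp)
    (fun {x y} hx hy => by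
      simp only [Set.mem_setOf_eq] at hx hy ⊢
      rw [mul_add, add_mul, hx.1, hy.1, hx.2, hy.2]; exact ⟨rfl, rfl⟩)
    (fun {x} hx => by
      simp only [Set.mem_setOf_eq] at hx ⊢
      rw [mul_neg, neg_mul, hx.1, hx.2]; exact ⟨rfl, rfl⟩)
    (fun {x y} hy => by
      simp only [Set.mem_setOf_eq] at hy ⊢
      constructor
      · rw [← mul_assoc, ← he_cent x, mul_assoc, hy.1]
      · rw [mul_assoc, hy.2])
    (fun {x y} hx => by
      simp only [Set.mem_setOf_eq] at hx ⊢
      constructor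
      · rw [← mul_assoc, hx.1]
      · rw [mul_assoc, he_cent y, ← mul_assoc, hx.2]) with hS_def
  have hS_carrier : (S : Set B) = {x : B | e * x = x ∧ x * e = x} := TwoSidedIdeal.coe_mk' _ _ _ _ _ _
  have hS_closed : IsClosed (S : Set B) := by
    rw [hS_carrier]
    exact (isClosed_eq (continuous_const.mul continuous_id) continuous_id).inter
      (isClosed_eq (continuous_id.mul continuous_const) continuous_id)
  rcases hsimple S hS_closed with hbot | htop
  · have hhS : hh ∈ S := by
      rw [← SetLike.mem_coe, hS_carrier]
      exact ⟨h_eh, h_he⟩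
    rw [hbot, TwoSidedIdeal.mem_bot] at hhS
    -- now hh = 0, derive ‖c‖ ≤ r / 2
    have hkey : c = cfcₙ (fun t : ℝ => t - gg t) c := by
      rw [cfcₙ_sub (fun t : ℝ => t) gg c (by fun_prop) (by simp) (by fun_prop) (by simp [hgg0]),
        cfcₙ_id' ℝ c, ← hh_def, hhS, sub_zero]
    have hbound : ∀ t ∈ quasispectrum ℝ c, ‖t - gg t‖ ≤ r / 2 := by
      intro t ht
      have ht0 : 0 ≤ t := by
        rw [hc_def] at ht
        exact aux_quasi_nonneg a t ht
      have habs : |t| = t := abs_of_nonneg ht0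
      rw [Real.norm_eq_abs, hgg_def]
      simp only [habs]
      rcases le_or_gt t (r / 2) with h1 | h1
      · rw [max_eq_right (by linarith), sub_zero, abs_of_nonneg ht0]
        exact h1
      · rw [max_eq_left (by linarith), show t - (t - r / 2) = r / 2 by ring,
          abs_of_nonneg (by linarith)]
    have : ‖c‖ ≤ r / 2 := by
      conv_lhs => rw [hkey]
      exact norm_cfcₙ_le hbound
    rw [← hr_def] at this
    linarith
  · apply hnonunital
    refine ⟨e, fun x => ?_⟩
    have hx : x ∈ S := by rw [htop]; exact TwoSidedIdeal.mem_top B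
    rw [← SetLike.mem_coe, hS_carrier] at hx
    exact hx

lemma aux_exists_mul_near (g : B) {ε : ℝ} (hε : 0 < ε) : ∃ c : B, ‖g * c - g‖ < ε := by
  set b := star g * g with hb_def
  have hb : IsSelfAdjoint b := IsSelfAdjoint.star_mul_self g
  set δ : ℝ := ε ^ 2 / 2 with hδ_def
  have hδ : 0 < δ := by positivity
  set f : ℝ → ℝ := fun t => min (|t| / δ) 1 with hf_def
  have hf : Continuous f := by
    apply Continuous.min _ continuous_const
    exact (continuous_abs).div_const δ
  have hf0 : f 0 = 0 := by simp [hf_def]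
  have hf_mem : ∀ t, f t ∈ Set.Icc (0:ℝ) 1 := by
    intro t
    constructor
    · exact le_min (by positivity) zero_le_one
    · exact min_le_right _ _
  set c := cfcₙ f b with hc_def
  have hcsa : IsSelfAdjoint c := cfcₙ_predicate f b
  refine ⟨c, ?_⟩
  have key : star (g * c - g) * (g * c - g) = cfcₙ (fun t => t * (1 - f t) ^ 2) b := by
    have h1 : star (g * c - g) * (g * c - g) = c * b * c - c * b - b * c + b := by
      rw [star_sub, star_mul, hcsa.star_eq, hb_def]
      noncomm_ring
    rw [h1]
    have e1 : cfcₙ (fun t : ℝ => t * (1 - f t) ^ 2) b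
        = cfcₙ (fun t : ℝ => (f t * t) * f t - f t * t - t * f t + t) b := by
      apply cfcₙ_congr
      intro t _
      ring
    rw [e1]
    rw [cfcₙ_add (fun t : ℝ => (f t * t) * f t - f t * t - t * f t) (fun t : ℝ => t) b
        (by fun_prop) (by simp [hf0]) (by fun_prop) (by simp)]
    rw [cfcₙ_sub (fun t : ℝ => (f t * t) * f t - f t * t) (fun t : ℝ => t * f t) b
        (by fun_prop) (by simp [hf0]) (by fun_prop) (by simp [hf0])]
    rw [cfcₙ_sub (fun t : ℝ => (f t * t) * f t) (fun t : ℝ => f t * t) b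
        (by fun_prop) (by simp [hf0]) (by fun_prop) (by simp [hf0])]
    rw [cfcₙ_mul (fun t : ℝ => f t * t) (fun t : ℝ => f t) b
        (by fun_prop) (by simp [hf0]) (by fun_prop) (by simp [hf0])]
    rw [cfcₙ_mul (fun t : ℝ => f t) (fun t : ℝ => t) b
        (by fun_prop) (by simp [hf0]) (by fun_prop) (by simp)]
    rw [cfcₙ_mul (fun t : ℝ => t) (fun t : ℝ => f t) b
        (by fun_prop) (by simp) (by fun_prop) (by simp [hf0])]
    rw [cfcₙ_id' ℝ b]
  have hbound : ∀ t ∈ quasispectrum ℝ b, ‖t * (1 - f t) ^ 2‖ ≤ δ := by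
    intro t ht
    have ht0 : 0 ≤ t := aux_quasi_nonneg g t ht
    rcases le_or_gt t δ with h | h
    · have h1 : (1 - f t) ^ 2 ≤ 1 := by
        have := hf_mem t
        nlinarith [this.1, this.2]
      have h2 : 0 ≤ (1 - f t) ^ 2 := sq_nonneg _
      rw [Real.norm_eq_abs, abs_of_nonneg (by positivity)]
      nlinarith
    · have hft : f t = 1 := by
        have : (1:ℝ) ≤ |t| / δ := by
          rw [le_div_iff₀ hδ]
          rw [abs_of_nonneg ht0]
          linarith
        simp [hf_def, min_eq_right this]
      simp [hft, hδ.le]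
  have hnorm : ‖star (g * c - g) * (g * c - g)‖ ≤ δ := by
    rw [key]
    exact norm_cfcₙ_le hbound
  have hsq : ‖g * c - g‖ ^ 2 ≤ δ := by
    rw [sq, ← CStarRing.norm_star_mul_self]
    exact hnorm
  have : ‖g * c - g‖ ^ 2 < ε ^ 2 := lt_of_le_of_lt hsq (by rw [hδ_def]; nlinarith)
  exact lt_of_pow_lt_pow_left₀ 2 hε.le this


end CStarAux

section C0Aux

variable {A : Type*} [NonUnitalCStarAlgebra A]
variable {X : Type*} [TopologicalSpace X] [T2Space X] [LocallyCompactSpace X]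

lemma aux_exists_eval (x : X) (a : A) : ∃ g : C₀(X, A), g x = a := by
  obtain ⟨φ, hsupp, hone, hmem, hcs⟩ := exists_continuous_sum_one_of_isOpen_isCompact
    (X := X) (n := 1) (s := fun _ => Set.univ) (t := {x}) (fun _ => isOpen_univ)
    isCompact_singleton (by simp)
  set ψ : C(X, ℝ) := φ 0 with hψ
  have hψx : ψ x = 1 := by
    have h := hone (Set.mem_singleton x)
    simpa [Fin.sum_univ_one] using h
  have hcont : Continuous fun y => ψ y • a := by fun_prop
  have hzero : Filter.Tendsto (fun y => ψ y • a) (Filter.cocompact X) (nhds 0) := by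
    have hev : (fun _ : X => (0 : A)) =ᶠ[Filter.cocompact X] (fun y => ψ y • a) := by
      rw [Filter.eventuallyEq_iff_exists_mem]
      refine ⟨(tsupport ψ)ᶜ, ?_, fun y hy => ?_⟩
      · rw [Filter.mem_cocompact]
        exact ⟨tsupport ψ, hcs 0, le_refl _⟩
      · show (0 : A) = ψ y • a
        rw [image_eq_zero_of_notMem_tsupport hy, zero_smul]
    exact Filter.Tendsto.congr' hev tendsto_const_nhds
  refine ⟨⟨⟨fun y => ψ y • a, hcont⟩, hzero⟩, ?_⟩
  show ψ x • a = a
  rw [hψx, one_smul]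

noncomputable def smulAux (φ : C(X, ℝ)) (hφ : ∀ y : X, |φ y| ≤ 1) (g : C₀(X, A)) : C₀(X, A) where
  toFun := fun y => φ y • g y
  continuous_toFun := by fun_prop
  zero_at_infty' := by
    refine squeeze_zero_norm (a := fun y => ‖g y‖) (fun y => ?_) (by simpa using (zero_at_infty g).norm)
    rw [norm_smul, Real.norm_eq_abs]
    calc |φ y| * ‖g y‖ ≤ 1 * ‖g y‖ :=
          mul_le_mul_of_nonneg_right (hφ y) (norm_nonneg _)
      _ = ‖g y‖ := one_mul _

@[simp] lemma smulAux_apply (φ : C(X, ℝ)) (hφ : ∀ y : X, |φ y| ≤ 1) (g : C₀(X, A)) (y : X) :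
    smulAux φ hφ g y = φ y • g y := rfl

lemma smulAux_norm_le (φ : C(X, ℝ)) (hφ : ∀ y : X, |φ y| ≤ 1) (g : C₀(X, A)) :
    ‖smulAux φ hφ g‖ ≤ ‖g‖ := by
  rw [← ZeroAtInftyContinuousMap.norm_toBCF_eq_norm]
  rw [BoundedContinuousFunction.norm_le (norm_nonneg g)]
  intro y
  show ‖φ y • g y‖ ≤ ‖g‖
  rw [norm_smul, Real.norm_eq_abs]
  calc |φ y| * ‖g y‖ ≤ 1 * ‖g y‖ := mul_le_mul_of_nonneg_right (hφ y) (norm_nonneg _)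
    _ = ‖g y‖ := one_mul _
    _ ≤ ‖g‖ := by
        rw [← ZeroAtInftyContinuousMap.norm_toBCF_eq_norm]
        exact BoundedContinuousFunction.norm_coe_le_norm g.toBCF y

lemma aux_smul_mem (I : TwoSidedIdeal C₀(X, A)) (hI : IsClosed (I : Set C₀(X, A)))
    (φ : C(X, ℝ)) (hφ : ∀ y : X, |φ y| ≤ 1) {g : C₀(X, A)} (hg : g ∈ I) :
    smulAux φ hφ g ∈ I := by
  have hcl : smulAux φ hφ g ∈ closure (I : Set C₀(X, A)) := by
    rw [Metric.mem_closure_iff]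
    intro ε hε
    obtain ⟨c, hc⟩ := aux_exists_mul_near (B := C₀(X, A)) g hε
    refine ⟨g * smulAux φ hφ c, I.mul_mem_right _ _ hg, ?_⟩
    rw [dist_eq_norm]
    have h1 : g * smulAux φ hφ c = smulAux φ hφ (g * c) := by
      ext y
      show g y * (φ y • c y) = φ y • (g y * c y)
      rw [mul_smul_comm]
    have h2 : smulAux φ hφ g - smulAux φ hφ (g * c) = smulAux φ hφ (g - g * c) := by
      ext y
      show φ y • g y - φ y • (g * c) y = φ y • (g y - (g * c) y)
      rw [smul_sub]
    rw [h1, h2]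
    calc ‖smulAux φ hφ (g - g * c)‖ ≤ ‖g - g * c‖ := smulAux_norm_le _ _ _
      _ = ‖g * c - g‖ := by rw [← norm_neg]; congr 1; abel
      _ < ε := hc
  rwa [hI.closure_eq] at hcl

end C0Aux


/-- Let `A` be a simple non-unital C*-algebra and `X` a locally compact
Hausdorff space.  Then every closed two-sided ideal `I` of `C₀(X, A)` equals its own Lie
normalizer: `N(I) = {f | [f,g] ∈ I for all g} = I`. -/
theorem lieNormalizer_eq_self_of_simple_nonunital
    (A : Type*) [NonUnitalNormedRing A] [StarRing A] [CStarRing A]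
    [NormedSpace ℂ A] [IsScalarTower ℂ A A] [SMulCommClass ℂ A A] [StarModule ℂ A]
    [CompleteSpace A]
    (hsimple : ∀ I : TwoSidedIdeal A, IsClosed (I : Set A) → I = ⊥ ∨ I = ⊤)
    (hnonunital : ¬ ∃ e : A, ∀ a : A, e * a = a ∧ a * e = a)
    (X : Type*) [TopologicalSpace X] [T2Space X] [LocallyCompactSpace X]
    (I : TwoSidedIdeal C₀(X, A)) (hI : IsClosed (I : Set C₀(X, A))) :
    {f : C₀(X, A) | ∀ g : C₀(X, A), f * g - g * f ∈ I} = (I : Set C₀(X, A)) := by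
  letI : NonUnitalCStarAlgebra A := { }
  apply Set.Subset.antisymm
  · intro f hf
    simp only [Set.mem_setOf_eq] at hf
    -- Step 1: f vanishes at every point where all of I vanishes
    have hfF : ∀ x : X, (∀ h : C₀(X, A), h ∈ I → h x = 0) → f x = 0 := by
      intro x hx
      apply aux_center_trivial hsimple hnonunital
      intro b
      obtain ⟨g, hg⟩ := aux_exists_eval x b
      have h0 := hx _ (hf g)
      have h1 : f x * g x - g x * f x = 0 := h0
      rw [hg] at h1
      exact sub_eq_zero.mp h1
    -- Step 2: density argument
    have hcl : f ∈ closure (I : Set C₀(X, A)) := by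
      rw [Metric.mem_closure_iff]
      intro ε hε
      set ε' : ℝ := ε / 2 with hε'_def
      have hε' : 0 < ε' := by positivity
      -- the compact set where f is large
      set K : Set X := {y | ε' ≤ ‖f y‖} with hK_def
      have hKclosed : IsClosed K := isClosed_le continuous_const (by fun_prop)
      have hKcompact : IsCompact K := by
        have h1 := (zero_at_infty f : Filter.Tendsto f (Filter.cocompact X) (nhds 0))
        have h2 : ∀ᶠ y in Filter.cocompact X, ‖f y‖ < ε' := by
          have := Metric.tendsto_nhds.mp h1 ε' hε'
          simpa [dist_zero_right] using this
        rw [Filter.eventually_iff, Filter.mem_cocompact] at h2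
        obtain ⟨t, htc, hts⟩ := h2
        refine htc.of_isClosed_subset hKclosed ?_
        intro y hy
        by_contra hyt
        have h3 := hts hyt
        have hy' : ε' ≤ ‖f y‖ := hy
        simp only [Set.mem_setOf_eq] at h3
        linarith
      -- at every point of K, values of I are dense in A
      have hpoint : ∀ x : X, x ∈ K → ∃ g : C₀(X, A), g ∈ I ∧ ‖g x - f x‖ < ε' := by
        intro x hxK
        set Jx : Set A := (fun h : C₀(X, A) => h x) '' (I : Set C₀(X, A)) with hJx_def
        have hJadd : ∀ u ∈ Jx, ∀ v ∈ Jx, u + v ∈ Jx := by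
          rintro u ⟨h1, hh1, rfl⟩ v ⟨h2, hh2, rfl⟩
          exact ⟨h1 + h2, I.add_mem hh1 hh2, rfl⟩
        have hJneg : ∀ u ∈ Jx, -u ∈ Jx := by
          rintro u ⟨h1, hh1, rfl⟩
          exact ⟨-h1, I.neg_mem hh1, rfl⟩
        have hJmull : ∀ (a : A), ∀ u ∈ Jx, a * u ∈ Jx := by
          rintro a u ⟨h1, hh1, rfl⟩
          obtain ⟨g, hg⟩ := aux_exists_eval x a
          exact ⟨g * h1, I.mul_mem_left _ _ hh1, by show g x * h1 x = a * h1 x; rw [hg]⟩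
        have hJmulr : ∀ (a : A), ∀ u ∈ Jx, u * a ∈ Jx := by
          rintro a u ⟨h1, hh1, rfl⟩
          obtain ⟨g, hg⟩ := aux_exists_eval x a
          exact ⟨h1 * g, I.mul_mem_right _ _ hh1, by show h1 x * g x = h1 x * a; rw [hg]⟩
        set T : TwoSidedIdeal A := TwoSidedIdeal.mk' (closure Jx)
          (subset_closure ⟨0, I.zero_mem, rfl⟩)
          (fun {u v} hu hv => map_mem_closure₂ continuous_add hu hv hJadd)
          (fun {u} hu => map_mem_closure continuous_neg hu hJneg)
          (fun {a u} hu => map_mem_closure (continuous_mul_left a) hu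
            (fun v hv => hJmull a v hv))
          (fun {u a} hu => map_mem_closure (f := (· * a)) (continuous_mul_right a) hu
            (fun v hv => hJmulr a v hv)) with hT_def
        have hT_carrier : (T : Set A) = closure Jx := TwoSidedIdeal.coe_mk' _ _ _ _ _ _
        have hT_closed : IsClosed (T : Set A) := by rw [hT_carrier]; exact isClosed_closure
        rcases hsimple T hT_closed with hbot | htop
        · exfalso
          have hxF : ∀ h : C₀(X, A), h ∈ I → h x = 0 := by
            intro h hh
            have h1 : h x ∈ Jx := ⟨h, hh, rfl⟩
            have h2 : h x ∈ (T : Set A) := hT_carrier ▸ subset_closure h1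
            rw [hbot] at h2
            simpa using h2
          have := hfF x hxF
          have hx2 : ε' ≤ ‖f x‖ := hxK
          rw [this, norm_zero] at hx2
          linarith
        · have hfx : f x ∈ (T : Set A) := by rw [htop]; exact TwoSidedIdeal.mem_top A
          rw [hT_carrier] at hfx
          rw [Metric.mem_closure_iff] at hfx
          obtain ⟨b, hbJ, hbd⟩ := hfx ε' hε'
          obtain ⟨g, hgI, rfl⟩ := hbJ
          exact ⟨g, hgI, by rwa [← dist_eq_norm, dist_comm]⟩
      -- choose approximating elements and build an open cover of K
      have hpoint' : ∀ z : {x // x ∈ K}, ∃ g : C₀(X, A), g ∈ I ∧ ‖g z.1 - f z.1‖ < ε' :=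
        fun z => hpoint z.1 z.2
      choose gs hgsI hgs using hpoint'
      set U : {x // x ∈ K} → Set X := fun z => {y | ‖gs z y - f y‖ < ε'} with hU_def
      have hUopen : ∀ z, IsOpen (U z) := by
        intro z
        have : Continuous fun y => ‖gs z y - f y‖ := by fun_prop
        exact isOpen_lt this continuous_const
      have hUcover : K ⊆ ⋃ z, U z := by
        intro x hx
        exact Set.mem_iUnion.mpr ⟨⟨x, hx⟩, hgs ⟨x, hx⟩⟩
      obtain ⟨t, ht⟩ := hKcompact.elim_finite_subcover U hUopen hUcover
      set n := t.card with hn_def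
      set e := t.equivFin with he_def
      set V : Fin n → Set X := fun i => U (e.symm i).1 with hV_def
      have hVopen : ∀ i, IsOpen (V i) := fun i => hUopen _
      have hVcover : K ⊆ ⋃ i, V i := by
        intro x hx
        obtain ⟨z, hzt, hzU⟩ := Set.mem_iUnion₂.mp (ht hx)
        refine Set.mem_iUnion.mpr ⟨e ⟨z, hzt⟩, ?_⟩
        show x ∈ U (e.symm (e ⟨z, hzt⟩)).1
        rw [Equiv.symm_apply_apply]
        exact hzU
      obtain ⟨p, hpsub, hpcs⟩ :=
        PartitionOfUnity.exists_isSubordinate_of_locallyFinite_t2space hKcompact V hVopen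
          (locallyFinite_of_finite _) hVcover
      -- bounds for the partition functions
      have hp01 : ∀ i : Fin n, ∀ y : X, |p i y| ≤ 1 := by
        intro i y
        rw [abs_of_nonneg (p.nonneg i y)]
        calc p i y ≤ ∑ j : Fin n, p j y := by
              refine Finset.single_le_sum (fun j _ => p.nonneg j y) (Finset.mem_univ i)
          _ = ∑ᶠ j, p j y := (finsum_eq_sum_of_fintype _).symm
          _ ≤ 1 := p.sum_le_one y
      set gi : Fin n → C₀(X, A) := fun i => gs (e.symm i).1 with hgi_def
      set h : C₀(X, A) := ∑ i : Fin n, smulAux (p i) (hp01 i) (gi i) with hh_def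
      have hhI : h ∈ I := by
        rw [hh_def]
        refine Finset.sum_induction _ (· ∈ I) (fun a b ha hb => I.add_mem ha hb) I.zero_mem ?_
        intro i _
        exact aux_smul_mem I hI (p i) (hp01 i) (hgsI _)
      refine ⟨h, hhI, ?_⟩
      rw [dist_eq_norm]
      have hbound : ∀ y : X, ‖(f - h) y‖ ≤ ε' := by
        intro y
        have coe_sum : ∀ (F : Fin n → C₀(X, A)), (∑ i : Fin n, F i) y = ∑ i : Fin n, F i y := by
          intro F
          induction (Finset.univ : Finset (Fin n)) using Finset.cons_induction with
          | empty => simp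
          | cons a s ha ih => rw [Finset.sum_cons, Finset.sum_cons, ← ih]; simp
        have happly : h y = ∑ i : Fin n, p i y • gi i y := by
          rw [hh_def, coe_sum]
          exact Finset.sum_congr rfl fun i _ => smulAux_apply (p i) (hp01 i) (gi i) y
        set sy : ℝ := ∑ i : Fin n, p i y with hsy_def
        have hsy0 : 0 ≤ sy := Finset.sum_nonneg fun i _ => p.nonneg i y
        have hsy1 : sy ≤ 1 := by
          rw [hsy_def, ← finsum_eq_sum_of_fintype]
          exact p.sum_le_one y
        have hterm : ∀ i : Fin n, p i y * ‖f y - gi i y‖ ≤ p i y * ε' := by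
          intro i
          rcases eq_or_lt_of_le (p.nonneg i y) with h0 | h0
          · rw [← h0, zero_mul, zero_mul]
          · have hy_supp : y ∈ tsupport (p i) := subset_tsupport _ (by
              simp only [Function.mem_support]
              exact ne_of_gt h0)
            have hyV : y ∈ V i := hpsub i hy_supp
            have : ‖gi i y - f y‖ < ε' := hyV
            rw [← norm_neg, neg_sub] at this
            exact mul_le_mul_of_nonneg_left this.le (p.nonneg i y)
        have hexp : (f - h) y = (1 - sy) • f y + ∑ i : Fin n, p i y • (f y - gi i y) := by
          have hsplit : ∑ i : Fin n, p i y • (f y - gi i y)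
              = sy • f y - ∑ i : Fin n, p i y • gi i y := by
            rw [hsy_def, Finset.sum_smul]
            rw [← Finset.sum_sub_distrib]
            exact Finset.sum_congr rfl fun i _ => smul_sub _ _ _
          rw [hsplit, sub_smul, one_smul]
          have : (f - h) y = f y - h y := rfl
          rw [this, happly]
          abel
        rw [hexp]
        calc ‖(1 - sy) • f y + ∑ i : Fin n, p i y • (f y - gi i y)‖
            ≤ ‖(1 - sy) • f y‖ + ‖∑ i : Fin n, p i y • (f y - gi i y)‖ := norm_add_le _ _
          _ ≤ (1 - sy) * ‖f y‖ + ∑ i : Fin n, p i y * ‖f y - gi i y‖ := by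
              gcongr
              · rw [norm_smul, Real.norm_eq_abs, abs_of_nonneg (by linarith)]
              · refine (norm_sum_le _ _).trans ?_
                refine Finset.sum_le_sum fun i _ => ?_
                rw [norm_smul, Real.norm_eq_abs, abs_of_nonneg (p.nonneg i y)]
          _ ≤ (1 - sy) * ‖f y‖ + ∑ i : Fin n, p i y * ε' :=
              add_le_add_right (Finset.sum_le_sum fun i _ => hterm i) _
          _ = (1 - sy) * ‖f y‖ + sy * ε' := by rw [← Finset.sum_mul, ← hsy_def]
          _ ≤ ε' := by
              rcases le_or_gt ε' (‖f y‖) with hyK | hyK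
              · have : y ∈ K := hyK
                have hsy_eq : sy = 1 := by
                  rw [hsy_def, ← finsum_eq_sum_of_fintype]
                  exact p.sum_eq_one this
                rw [hsy_eq]
                ring_nf
                rfl
              · nlinarith [norm_nonneg (f y)]
      have : ‖f - h‖ ≤ ε' := by
        rw [← ZeroAtInftyContinuousMap.norm_toBCF_eq_norm]
        rw [BoundedContinuousFunction.norm_le hε'.le]
        exact hbound
      linarith
    rwa [hI.closure_eq] at hcl
  · intro f hf g
    exact I.sub_mem (I.mul_mem_right _ _ hf) (I.mul_mem_left _ _ hf)
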